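/- arXiv:2007.12730 — 2 statements merged into one kernel-verified Lean document; each statement's English description precedes it below -/
import Mathlib

section
/- Let s ∈ ℤ and set z = t(1+(1-s)t)^{1-s} ∈ ℚ[[t]]. Define V_s(z) = (1+(1-s)t)^{1-s}(1+(2-s)t)^s and W_s(z) = (1+(1-s)t)^{(s/2)-1}(1+(2-s)t)^{(1-s)/2}, as formal power series in z (via inverting the variable change; fractional powers are defined since the series have constant term 1). Then V_s(z)·W_s(z)² = 1 + v where v = t(1-(s-1)t)^{-1}, and moreover the substitution w = v(1+v)^{(s-1)²-1} transforms z-series to w-series consistently, i.e. g_{s-1}(w) = V_s(z)W_s(z)² under w = v(1+v)^{(s-1)²-1}, z = t(1+(1-s)t)^{1-s}, v = t(1-(s-1)t)^{-1}. -/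
/-- The formal variable `t`, as an element of the field `ℚ((t))` of Laurent series. -/
noncomputable def tVar : LaurentSeries ℚ := HahnSeries.single 1 1

lemma aux_ne (c : LaurentSeries ℚ) (hc : c.coeff (-1) = 0) :
    (1 + c * tVar) ≠ 0 := by
  intro h
  have h0 := congrArg (fun f => HahnSeries.coeff f 0) h
  have h2 : (c * HahnSeries.single (1:ℤ) (1:ℚ)).coeff ((-1)+1)
      = c.coeff (-1) * 1 := HahnSeries.coeff_mul_single_add
  norm_num [hc] at h2
  simp [tVar, h2] at h0

lemma cast_coeff (s : ℤ) : ((s : LaurentSeries ℚ)).coeff (-1) = 0 := by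
  rw [show (s : LaurentSeries ℚ) = HahnSeries.C (s:ℚ) from (map_intCast HahnSeries.C s).symm,
    HahnSeries.C_apply, HahnSeries.coeff_single_of_ne (by norm_num)]

lemma two_coeff : ((2 : LaurentSeries ℚ)).coeff (-1) = 0 := by
  rw [show (2 : LaurentSeries ℚ) = ((2:ℤ) : LaurentSeries ℚ) by norm_cast]
  exact cast_coeff 2

/-- Rank 1 Segre–Verlinde correspondence, first relation: with
`z = t(1+(1-s)t)^(1-s)`, `V_s(z) = (1+(1-s)t)^(1-s) (1+(2-s)t)^s` and
`W_s(z) = (1+(1-s)t)^(s/2-1) (1+(2-s)t)^((1-s)/2)` (so that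
`W_s² = (1+(1-s)t)^(s-2) (1+(2-s)t)^(1-s)`), one has
`V_s(z)·W_s(z)² = 1 + v` where `v = t(1-(s-1)t)⁻¹`; equivalently
`g_{s-1}(w) = V_s(z) W_s(z)²` under `w = v(1+v)^((s-1)²-1)`, since
`g_{s-1}(w) = 1 + v`. Everything is expanded in the variable `t`, working in
the field of formal Laurent series `ℚ((t))`. -/
theorem rank_one_segre_verlinde_g (s : ℤ) (W : LaurentSeries ℚ)
    (hW : W ^ 2 = (1 + (1 - (s : LaurentSeries ℚ)) * tVar) ^ (s - 2) *
        (1 + (2 - (s : LaurentSeries ℚ)) * tVar) ^ (1 - s)) :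
    (1 + (1 - (s : LaurentSeries ℚ)) * tVar) ^ (1 - s) *
        (1 + (2 - (s : LaurentSeries ℚ)) * tVar) ^ s * W ^ 2
      = 1 + tVar * (1 - ((s : LaurentSeries ℚ) - 1) * tVar)⁻¹ := by
  set A := 1 + (1 - (s : LaurentSeries ℚ)) * tVar with hAdef
  set B := 1 + (2 - (s : LaurentSeries ℚ)) * tVar with hBdef
  have hA : A ≠ 0 := aux_ne _ (by simp [cast_coeff, HahnSeries.coeff_sub, HahnSeries.coeff_one])
  have hB : B ≠ 0 := aux_ne _ (by simp [cast_coeff, two_coeff, HahnSeries.coeff_sub])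
  have hA' : (1 - ((s : LaurentSeries ℚ) - 1) * tVar) = A := by rw [hAdef]; ring
  rw [hW, hA']
  have key : A ^ (1 - s) * B ^ s * (A ^ (s - 2) * B ^ (1 - s))
      = A ^ ((1 - s) + (s - 2)) * B ^ (s + (1 - s)) := by
    rw [zpow_add₀ hA, zpow_add₀ hB]; ring
  rw [key, show (1 - s) + (s - 2) = -1 by ring, show s + (1 - s) = 1 by ring,
    zpow_neg_one, zpow_one]
  field_simp
  rw [hAdef, hBdef]; ring
end

section
/- Let r ∈ ℤ, s = 1+r, z = t(1+(1-s)t)^{1-s}, v = t(1-rt)^{-1}, w = v(1+v)^{r²-1}, all in ℚ[[t]]. Then f_r(w) = W_s(z)^{-4s}·X_s(z)², where f_r(w) = (1+v)^{r²}(1+r²v)^{-1}, W_s(z) = (1+(1-s)t)^{(s/2)-1}(1+(2-s)t)^{(1-s)/2}, and X_s(z) = (1+(1-s)t)^{(s²/2)-s}(1+(2-s)t)^{(-s²+1)/2}(1+(1-s)(2-s)t)^{-1/2}. -/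
lemma castEqAux (a : ℤ) : ((a : ℤ) : LaurentSeries ℚ) = HahnSeries.single 0 ((a:ℚ)) := by
  rw [← HahnSeries.C_apply]; simp [HahnSeries.C_apply]

lemma keyAux (q : ℚ) : ((1 : LaurentSeries ℚ) + HahnSeries.single 0 q * tVar) ≠ 0 := by
  intro h
  have := congrArg (fun f => f.coeff 0) h
  simp [tVar, HahnSeries.single_mul_single] at this

lemma key2Aux (a : ℤ) : ((1 : LaurentSeries ℚ) + (a : LaurentSeries ℚ) * tVar) ≠ 0 := by
  rw [castEqAux]; exact keyAux _

/-- Rank 1 Segre–Verlinde correspondence, second relation: with `r ∈ ℤ`, `s = 1+r`,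
`z = t(1+(1-s)t)^(1-s)`, `v = t(1-rt)⁻¹`, `w = v(1+v)^(r²-1)`, one has
`f_r(w) = W_s(z)^(-4s) · X_s(z)²`, where `f_r(w) = (1+v)^(r²)(1+r²v)⁻¹`,
`W_s = (1+(1-s)t)^(s/2-1)(1+(2-s)t)^((1-s)/2)` and
`X_s = (1+(1-s)t)^(s²/2-s)(1+(2-s)t)^((-s²+1)/2)(1+(1-s)(2-s)t)^(-1/2)`.
The half-integer powers `W_s` and `X_s` are specified by their squares, and all
series are expanded in `t`, working in the field `ℚ((t))` of Laurent series. -/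
theorem rank_one_segre_verlinde_f (r s : ℤ) (hs : s = 1 + r) (W X : LaurentSeries ℚ)
    (hW : W ^ 2 = (1 + (1 - (s : LaurentSeries ℚ)) * tVar) ^ (s - 2) *
        (1 + (2 - (s : LaurentSeries ℚ)) * tVar) ^ (1 - s))
    (hX : X ^ 2 = (1 + (1 - (s : LaurentSeries ℚ)) * tVar) ^ (s ^ 2 - 2 * s) *
        (1 + (2 - (s : LaurentSeries ℚ)) * tVar) ^ (1 - s ^ 2) *
        (1 + (1 - (s : LaurentSeries ℚ)) * (2 - (s : LaurentSeries ℚ)) * tVar)⁻¹) :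
    (1 + tVar * (1 - (r : LaurentSeries ℚ) * tVar)⁻¹) ^ (r ^ 2) *
        (1 + (r : LaurentSeries ℚ) ^ 2 * (tVar * (1 - (r : LaurentSeries ℚ) * tVar)⁻¹))⁻¹
      = W ^ (-(4 * s)) * X ^ 2 := by
  set A : LaurentSeries ℚ := 1 + (1 - (s : LaurentSeries ℚ)) * tVar with hAdef
  set B : LaurentSeries ℚ := 1 + (2 - (s : LaurentSeries ℚ)) * tVar with hBdef
  set C : LaurentSeries ℚ :=
    1 + (1 - (s : LaurentSeries ℚ)) * (2 - (s : LaurentSeries ℚ)) * tVar with hCdef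
  have hsc : (s : LaurentSeries ℚ) = 1 + (r : LaurentSeries ℚ) := by
    rw [hs]; push_cast; ring
  have hA : A ≠ 0 := by
    have := key2Aux (1 - s); push_cast at this
    rw [hAdef]; exact this
  have hB : B ≠ 0 := by
    have := key2Aux (2 - s); push_cast at this
    rw [hBdef]; exact this
  have hC : C ≠ 0 := by
    have := key2Aux ((1 - s) * (2 - s)); push_cast at this
    rw [hCdef]; exact this
  have hrA : (1 : LaurentSeries ℚ) - (r : LaurentSeries ℚ) * tVar = A := by
    rw [hAdef, hsc]; ring
  have hBA : B = A + tVar := by rw [hAdef, hBdef]; ring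
  have hCA : C = A + (r : LaurentSeries ℚ) ^ 2 * tVar := by
    rw [hAdef, hCdef, hsc]; ring
  have e1 : 1 + tVar * A⁻¹ = B * A⁻¹ := by
    rw [hBA, add_mul, mul_inv_cancel₀ hA, add_comm]
  have e2 : 1 + (r : LaurentSeries ℚ) ^ 2 * (tVar * A⁻¹) = C * A⁻¹ := by
    rw [hCA, add_mul, mul_inv_cancel₀ hA, mul_assoc, add_comm]
  rw [hrA, e1, e2]
  have hW4 : W ^ (-(4 * s)) = (W ^ 2) ^ (-(2 * s)) := by
    rw [← zpow_natCast W 2, ← zpow_mul]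
    congr 1
    push_cast; ring
  rw [hW4, hW, hX]
  rw [mul_zpow, inv_zpow, mul_inv_rev, inv_inv, mul_zpow, ← zpow_mul, ← zpow_mul,
    ← zpow_neg]
  calc B ^ r ^ 2 * A ^ (-(r ^ 2)) * (A * C⁻¹)
      = A ^ (1 - r ^ 2) * B ^ (r ^ 2) * C⁻¹ := by
        rw [show (1 - r ^ 2) = -(r ^ 2) + 1 by ring, zpow_add₀ hA, zpow_one]; ring
    _ = A ^ ((s - 2) * -(2 * s) + (s ^ 2 - 2 * s)) *
          B ^ ((1 - s) * -(2 * s) + (1 - s ^ 2)) * C⁻¹ := by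
        rw [hs]; ring_nf
    _ = A ^ ((s - 2) * -(2 * s)) * B ^ ((1 - s) * -(2 * s)) *
          (A ^ (s ^ 2 - 2 * s) * B ^ (1 - s ^ 2) * C⁻¹) := by
        rw [zpow_add₀ hA, zpow_add₀ hB]; ring
end
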